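/- For the squared error loss and the linear model f_β(x1, x2) = x1ᵀβ1 + x2ᵀβ2, the population model reliance difference satisfies e_switch(f_β) − e_orig(f_β) = 2·Cov(Y, X1)·β1 − 2·β2ᵀ·Cov(X2, X1)·β1, where Cov(Y, X1) is the 1×p1 vector with j-th entry Cov(Y, X1[j]) and Cov(X2, X1) is the p2×p1 matrix with (k, j) entry Cov(X2[k], X1[j]). -/

import Mathlib

open MeasureTheory Matrix


private lemma int_mul_of_sq {Ω : Type*} [MeasurableSpace Ω] {μ : Measure Ω}
    {f g : Ω → ℝ} (hf : MemLp f 2 μ) (hg : MemLp g 2 μ) :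
    Integrable (fun ω => f ω * g ω) μ := by
  refine Integrable.mono' ((hf.integrable_sq.add hg.integrable_sq).const_mul (1/2 : ℝ))
    (hf.aestronglyMeasurable.mul hg.aestronglyMeasurable) ?_
  filter_upwards with ω
  simp only [Pi.add_apply]
  rw [Real.norm_eq_abs, abs_mul]
  nlinarith [sq_nonneg (|f ω| - |g ω|), sq_abs (f ω), sq_abs (g ω),
    abs_nonneg (f ω), abs_nonneg (g ω)]



/-- Theorem 2, Eq (population part): for the squared error loss and a linear
model `f_β(x1, x2) = x1ᵀβ1 + x2ᵀβ2`,
`e_switch(f_β) − e_orig(f_β) = 2·Cov(Y, X1)·β1 − 2·β2ᵀ·Cov(X2, X1)·β1`. -/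
theorem stmt_1 {Ω : Type*} [MeasurableSpace Ω]
    (μ : Measure Ω) [IsProbabilityMeasure μ]
    {p1 p2 : ℕ} (hp1 : 0 < p1) (hp2 : 0 < p2)
    (Y : Ω → ℝ) (X1 : Ω → Fin p1 → ℝ) (X2 : Ω → Fin p2 → ℝ)
    (hY : Measurable Y) (hX1 : Measurable X1) (hX2 : Measurable X2)
    (hY2 : Integrable (fun ω => (Y ω) ^ 2) μ)
    (hX12 : ∀ j, Integrable (fun ω => (X1 ω j) ^ 2) μ)
    (hX22 : ∀ k, Integrable (fun ω => (X2 ω k) ^ 2) μ)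
    (β1 : Fin p1 → ℝ) (β2 : Fin p2 → ℝ) :
    (∫ q : Ω × Ω, (Y q.2 - X1 q.1 ⬝ᵥ β1 - X2 q.2 ⬝ᵥ β2) ^ 2 ∂(μ.prod μ))
        - (∫ ω, (Y ω - X1 ω ⬝ᵥ β1 - X2 ω ⬝ᵥ β2) ^ 2 ∂μ)
      = 2 * (∑ j, ((∫ ω, Y ω * X1 ω j ∂μ) - (∫ ω, Y ω ∂μ) * ∫ ω, X1 ω j ∂μ) * β1 j)
        - 2 * (∑ k, ∑ j, β2 k *
            ((∫ ω, X2 ω k * X1 ω j ∂μ) - (∫ ω, X2 ω k ∂μ) * ∫ ω, X1 ω j ∂μ) * β1 j) := by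
  set A : Ω → ℝ := fun ω => Y ω - X2 ω ⬝ᵥ β2 with hA
  set B : Ω → ℝ := fun ω => X1 ω ⬝ᵥ β1 with hB
  have hmY : MemLp Y 2 μ := (memLp_two_iff_integrable_sq hY.aestronglyMeasurable).2 hY2
  have hm1 : ∀ j, MemLp (fun ω => X1 ω j) 2 μ := fun j =>
    (memLp_two_iff_integrable_sq ((measurable_pi_apply j).comp hX1).aestronglyMeasurable).2 (hX12 j)
  have hm2 : ∀ k, MemLp (fun ω => X2 ω k) 2 μ := fun k =>
    (memLp_two_iff_integrable_sq ((measurable_pi_apply k).comp hX2).aestronglyMeasurable).2 (hX22 k)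
  have hmB : MemLp B 2 μ := by
    have e : B = fun ω => ∑ j, β1 j * X1 ω j := by
      funext ω; simp [hB, dotProduct, mul_comm]
    rw [e]
    exact memLp_finset_sum _ (fun j _ => (hm1 j).const_mul _)
  have hmA : MemLp A 2 μ := by
    have h2s : MemLp (fun ω => X2 ω ⬝ᵥ β2) 2 μ := by
      have e : (fun ω => X2 ω ⬝ᵥ β2) = fun ω => ∑ k, β2 k * X2 ω k := by
        funext ω; simp [dotProduct, mul_comm]
      rw [e]
      exact memLp_finset_sum _ (fun k _ => (hm2 k).const_mul _)
    exact hmY.sub h2s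
  have iA : Integrable A μ := hmA.integrable one_le_two
  have iB : Integrable B μ := hmB.integrable one_le_two
  have iA2 : Integrable (fun ω => A ω ^ 2) μ := hmA.integrable_sq
  have iB2 : Integrable (fun ω => B ω ^ 2) μ := hmB.integrable_sq
  have iAB : Integrable (fun ω => A ω * B ω) μ := int_mul_of_sq hmA hmB
  -- step 1
  have h1 : (∫ q : Ω × Ω, (Y q.2 - X1 q.1 ⬝ᵥ β1 - X2 q.2 ⬝ᵥ β2) ^ 2 ∂(μ.prod μ))
      = (∫ ω, A ω ^ 2 ∂μ) - 2 * ((∫ ω, B ω ∂μ) * (∫ ω, A ω ∂μ)) + (∫ ω, B ω ^ 2 ∂μ) := by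
    have e : (fun q : Ω × Ω => (Y q.2 - X1 q.1 ⬝ᵥ β1 - X2 q.2 ⬝ᵥ β2) ^ 2)
        = fun q : Ω × Ω => ((1 : ℝ) * A q.2 ^ 2 - (2 * B q.1) * A q.2 + B q.1 ^ 2 * 1) := by
      funext q; simp only [hA, hB]; ring
    have i1 : Integrable (fun q : Ω × Ω => (1 : ℝ) * A q.2 ^ 2) (μ.prod μ) :=
      (integrable_const 1).mul_prod iA2
    have i2 : Integrable (fun q : Ω × Ω => (2 * B q.1) * A q.2) (μ.prod μ) :=
      (iB.const_mul 2).mul_prod iA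
    have i3 : Integrable (fun q : Ω × Ω => B q.1 ^ 2 * 1) (μ.prod μ) :=
      iB2.mul_prod (integrable_const 1)
    have i12 : Integrable (fun q : Ω × Ω =>
        (1 : ℝ) * A q.2 ^ 2 - (2 * B q.1) * A q.2) (μ.prod μ) := i1.sub i2
    rw [e, integral_add i12 i3, integral_sub i1 i2,
      integral_prod_mul (fun _ : Ω => (1 : ℝ)) (fun ω => A ω ^ 2),
      integral_prod_mul (fun ω => 2 * B ω) A,
      integral_prod_mul (fun ω => B ω ^ 2) (fun _ : Ω => (1 : ℝ)),
      integral_const_mul _ _]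
    simp only [integral_const, measure_univ, probReal_univ, one_smul, smul_eq_mul, one_mul,
      mul_one]
    ring
  -- step 2
  have h2 : (∫ ω, (Y ω - X1 ω ⬝ᵥ β1 - X2 ω ⬝ᵥ β2) ^ 2 ∂μ)
      = (∫ ω, A ω ^ 2 ∂μ) - 2 * (∫ ω, A ω * B ω ∂μ) + (∫ ω, B ω ^ 2 ∂μ) := by
    have e : (fun ω => (Y ω - X1 ω ⬝ᵥ β1 - X2 ω ⬝ᵥ β2) ^ 2)
        = fun ω => (A ω ^ 2 - 2 * (A ω * B ω) + B ω ^ 2) := by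
      funext ω; simp only [hA, hB]; ring
    have i12 : Integrable (fun ω => A ω ^ 2 - 2 * (A ω * B ω)) μ := iA2.sub (iAB.const_mul 2)
    rw [e, integral_add i12 iB2, integral_sub iA2 (iAB.const_mul 2), integral_const_mul _ _]
  -- base integrals
  have hIB : (∫ ω, B ω ∂μ) = ∑ j, (∫ ω, X1 ω j ∂μ) * β1 j := by
    have e : B = fun ω => ∑ j, β1 j * X1 ω j := by
      funext ω; simp [hB, dotProduct, mul_comm]
    rw [e, integral_finset_sum _ (fun j _ => ((hm1 j).integrable one_le_two).const_mul _)]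
    refine Finset.sum_congr rfl fun j _ => ?_
    rw [integral_const_mul]; ring
  have hIA : (∫ ω, A ω ∂μ) = (∫ ω, Y ω ∂μ) - ∑ k, (∫ ω, X2 ω k ∂μ) * β2 k := by
    have e : A = fun ω => Y ω - ∑ k, β2 k * X2 ω k := by
      funext ω; simp [hA, dotProduct, mul_comm]
    have isum : Integrable (fun ω => ∑ k, β2 k * X2 ω k) μ :=
      integrable_finset_sum _ (fun k _ => ((hm2 k).integrable one_le_two).const_mul _)
    rw [e, integral_sub (hmY.integrable one_le_two) isum,
      integral_finset_sum _ (fun k _ => ((hm2 k).integrable one_le_two).const_mul _)]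
    congr 1
    refine Finset.sum_congr rfl fun k _ => ?_
    rw [integral_const_mul]; ring
  have hIAB : (∫ ω, A ω * B ω ∂μ)
      = ∑ j, ((∫ ω, Y ω * X1 ω j ∂μ) * β1 j
          - ∑ k, ((∫ ω, X2 ω k * X1 ω j ∂μ) * β2 k) * β1 j) := by
    have e : (fun ω => A ω * B ω)
        = fun ω => ∑ j, (β1 j * (Y ω * X1 ω j) - ∑ k, (β2 k * β1 j) * (X2 ω k * X1 ω j)) := by
      funext ω
      simp only [hA, hB, dotProduct, sub_mul, Finset.mul_sum, Finset.sum_mul,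
        Finset.sum_sub_distrib]
      congr 1
      · exact Finset.sum_congr rfl fun j _ => by ring
      · exact Finset.sum_congr rfl fun j _ =>
          Finset.sum_congr rfl fun k _ => by ring
    have iterm : ∀ j, Integrable (fun ω =>
        β1 j * (Y ω * X1 ω j) - ∑ k, (β2 k * β1 j) * (X2 ω k * X1 ω j)) μ := fun j =>
      ((int_mul_of_sq hmY (hm1 j)).const_mul _).sub
        (integrable_finset_sum _ (fun k _ => (int_mul_of_sq (hm2 k) (hm1 j)).const_mul _))
    rw [e, integral_finset_sum _ (fun j _ => iterm j)]
    refine Finset.sum_congr rfl fun j _ => ?_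
    rw [integral_sub ((int_mul_of_sq hmY (hm1 j)).const_mul _)
        (integrable_finset_sum _ (fun k _ => (int_mul_of_sq (hm2 k) (hm1 j)).const_mul _)),
      integral_const_mul _ _,
      integral_finset_sum _ (fun k _ => (int_mul_of_sq (hm2 k) (hm1 j)).const_mul _)]
    simp only [integral_const_mul]
    rw [mul_comm]
    congr 1
    exact Finset.sum_congr rfl fun k _ => by ring
  rw [h1, h2, hIAB, hIA, hIB]
  simp only [mul_sub, sub_mul, Finset.mul_sum, Finset.sum_mul, Finset.sum_sub_distrib,
    Finset.sum_mul_sum]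
  rw [show (∑ x : Fin p1, ∑ i : Fin p2,
      2 * ((∫ (ω : Ω), X2 ω i * X1 ω x ∂μ) * β2 i * β1 x))
      = ∑ i : Fin p2, ∑ x : Fin p1,
      2 * ((∫ (ω : Ω), X2 ω i * X1 ω x ∂μ) * β2 i * β1 x) from Finset.sum_comm]
  rw [show (∑ i : Fin p1, 2 * ((∫ (ω : Ω), X1 ω i ∂μ) * β1 i * ∫ (ω : Ω), Y ω ∂μ))
      = ∑ i : Fin p1, 2 * (((∫ (ω : Ω), Y ω ∂μ) * ∫ (ω : Ω), X1 ω i ∂μ) * β1 i) from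
      Finset.sum_congr rfl fun i _ => by ring]
  rw [show (∑ x : Fin p2, ∑ i : Fin p1,
        2 * ((∫ (ω : Ω), X1 ω i ∂μ) * β1 i * ((∫ (ω : Ω), X2 ω x ∂μ) * β2 x)))
      = ∑ x : Fin p2, ∑ i : Fin p1,
        2 * (β2 x * ((∫ (ω : Ω), X2 ω x ∂μ) * ∫ (ω : Ω), X1 ω i ∂μ) * β1 i) from
      Finset.sum_congr rfl fun x _ => Finset.sum_congr rfl fun i _ => by ring]
  rw [show (∑ i : Fin p2, ∑ x : Fin p1,
        2 * ((∫ (ω : Ω), X2 ω i * X1 ω x ∂μ) * β2 i * β1 x))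
      = ∑ x : Fin p2, ∑ i : Fin p1,
        2 * ((β2 x * ∫ (ω : Ω), X2 ω x * X1 ω i ∂μ) * β1 i) from
      Finset.sum_congr rfl fun x _ => Finset.sum_congr rfl fun i _ => by ring]
  ring
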